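/- Let v ≥ u ≥ 3 be integers and let x be an integer that is not divisible by 2^v. For an odd integer α ∈ [0..2^v), define h_α(x) = ⌊(αx mod 2^v)/2^{v−u}⌋, where (αx mod 2^v) denotes the representative in [0..2^v). Then the number of odd α ∈ [0..2^v) such that h_α(x) ∈ {0, 1, 2, 2^u−2, 2^u−1} is at most 2^{v−u+2}. Equivalently, if α is chosen uniformly at random among the 2^{v−1} odd integers in [0..2^v), then Pr[h_α(x) ∈ {0, 1, 2, 2^u−2, 2^u−1}] ≤ 8/2^u. -/

import Mathlib

/-- The hash function `h_α(x) = ⌊(αx mod 2^v) / 2^(v−u)⌋`, where `x mod 2^v` is the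
representative in `[0..2^v)` (integer `emod`) and the division is floor division of
a non-negative integer. -/
def hfun (u v : ℕ) (α : ℤ) : ℤ → ℤ :=
  fun x => (α * x % 2 ^ v) / 2 ^ (v - u)

open Finset

/-- number of odds below `N` is `N/2` -/
lemma odd_card_range (N : ℕ) : ((range N).filter (fun a => Odd a)).card = N / 2 := by
  induction N with
  | zero => simp
  | succ n ih =>
    rw [Finset.range_add_one, Finset.filter_insert]
    by_cases h : Odd n
    · rw [if_pos h, Finset.card_insert_of_notMem (by simp), ih]
      have := Nat.odd_iff.mp h
      omega
    · rw [if_neg h, ih]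
      have := Nat.even_iff.mp (Nat.not_odd_iff_even.mp h)
      omega

lemma odd_card_range_ge (L N : ℕ) (hL : 2 ∣ L) :
    ((range N).filter (fun a => Odd a ∧ L ≤ a)).card ≤ (N - L) / 2 := by
  calc ((range N).filter (fun a => Odd a ∧ L ≤ a)).card
      ≤ ((range (N - L)).filter (fun a => Odd a)).card := by
        apply Finset.card_le_card_of_injOn (fun a => a - L)
        · intro a ha
          simp only [mem_coe, mem_filter, mem_range, Nat.odd_iff] at ha ⊢
          omega
        · intro a ha b hb hab
          simp only [coe_filter, Set.mem_setOf_eq, mem_range] at ha hb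
          dsimp only at hab
          omega
    _ = (N - L) / 2 := odd_card_range _

lemma card_filter_mod (k n : ℕ) (hn : 0 < n) (Q : ℕ → Prop) [DecidablePred Q] :
    ((range (k * n)).filter (fun a => Q (a % n))).card
      = k * ((range n).filter Q).card := by
  have hprod : ((range k) ×ˢ ((range n).filter Q)).card
      = k * ((range n).filter Q).card := by
    rw [Finset.card_product, Finset.card_range]
  rw [← hprod]
  apply Finset.card_bij' (fun a _ => (a / n, a % n)) (fun p _ => n * p.1 + p.2)
  · intro a ha
    simp only [mem_filter, mem_range] at ha
    simp only [Finset.mem_product, mem_range, mem_filter]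
    refine ⟨?_, Nat.mod_lt _ hn, ha.2⟩
    exact (Nat.div_lt_iff_lt_mul hn).mpr ha.1
  · intro p hp
    simp only [Finset.mem_product, mem_range, mem_filter] at hp
    simp only [mem_filter, mem_range]
    constructor
    · calc n * p.1 + p.2 < n * p.1 + n := by omega
        _ = n * (p.1 + 1) := by ring
        _ ≤ n * k := Nat.mul_le_mul_left n hp.1
        _ = k * n := mul_comm _ _
    · rw [Nat.mul_add_mod, Nat.mod_eq_of_lt hp.2.1]
      exact hp.2.2
  · intro a _
    exact Nat.div_add_mod a n
  · intro p hp
    simp only [Finset.mem_product, mem_range, mem_filter] at hp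
    have h1 : (n * p.1 + p.2) / n = p.1 := by
      rw [Nat.mul_add_div hn, Nat.div_eq_of_lt hp.2.1, Nat.add_zero]
    have h2 : (n * p.1 + p.2) % n = p.2 := by
      rw [Nat.mul_add_mod, Nat.mod_eq_of_lt hp.2.1]
    rw [h1, h2]

lemma inv_comp {m mi n : ℕ} (h1 : m * mi % n = 1) (c : ℕ) (hc : c < n) :
    ((c * m % n) * mi) % n = c := by
  rw [Nat.mod_mul_mod, mul_assoc, Nat.mul_mod c, h1, mul_one,
    Nat.mod_eq_of_lt hc, Nat.mod_eq_of_lt hc]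

lemma card_filter_mul {n m mi : ℕ} (hn : 0 < n) (h1 : m * mi % n = 1)
    (Q : ℕ → Prop) [DecidablePred Q] :
    ((range n).filter (fun b => Q (b * m % n))).card
      = ((range n).filter Q).card := by
  apply Finset.card_bij' (fun b _ => b * m % n) (fun c _ => c * mi % n)
  · intro b hb
    simp only [mem_filter, mem_range] at hb ⊢
    exact ⟨Nat.mod_lt _ hn, hb.2⟩
  · intro c hc
    simp only [mem_filter, mem_range] at hc ⊢
    refine ⟨Nat.mod_lt _ hn, ?_⟩
    rw [inv_comp (by rwa [mul_comm] at h1) c hc.1]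
    exact hc.2
  · intro b hb
    simp only [mem_filter, mem_range] at hb
    exact inv_comp h1 b hb.1
  · intro c hc
    simp only [mem_filter, mem_range] at hc
    exact inv_comp (by rwa [mul_comm] at h1) c hc.1

open scoped Classical in
lemma key_nat (u v : ℕ) (hu : 3 ≤ u) (huv : u ≤ v) (y : ℕ) (hy0 : 0 < y) (hy : y < 2 ^ v) :
    ((range (2 ^ v)).filter fun α => Odd α ∧
        (α * y % 2 ^ v / 2 ^ (v - u) ≤ 2 ∨ 2 ^ u - 2 ≤ α * y % 2 ^ v / 2 ^ (v - u))).card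
      ≤ 2 ^ (v - u + 2) := by
  obtain ⟨s, m, hm2, hym⟩ := Nat.exists_eq_pow_mul_and_not_dvd hy0.ne' 2 (by norm_num)
  have hmodd : Odd m := Nat.odd_iff.mpr (by omega)
  have hm0 : 0 < m := hmodd.pos
  have hsv : s < v := by
    have h1 : (2:ℕ)^s ≤ y := by
      calc (2:ℕ)^s = 2^s * 1 := (mul_one _).symm
        _ ≤ 2^s * m := Nat.mul_le_mul_left _ hm0
        _ = y := hym.symm
    exact (Nat.pow_lt_pow_iff_right (by norm_num)).mp (lt_of_le_of_lt h1 hy)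
  set t := v - u with ht
  set w := v - s with hw
  have hw1 : 1 ≤ w := by omega
  have hvw : (2:ℕ)^v = 2^s * 2^w := by rw [← pow_add]; congr 1; omega
  have h2w : (2:ℕ) ∣ 2^w := dvd_pow_self 2 (by omega)
  have ht0 : 0 < (2:ℕ)^t := Nat.pow_pos (by norm_num)
  -- rewrite the remainder
  have hrem : ∀ α : ℕ, α * y % 2^v = 2^s * (α * m % 2^w) := by
    intro α
    rw [hym, hvw, show α * (2^s * m) = 2^s * (α * m) by ring, Nat.mul_mod_mul_left]
  -- the target predicate on γ = (α * m % 2^w)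
  set Q : ℕ → Prop := fun γ => Odd γ ∧ (2^s * γ < 3 * 2^t ∨ 2^v - 2^(t+1) ≤ 2^s * γ) with hQ
  -- condition as function of α % 2^w
  have hcongr1 : ((range (2 ^ v)).filter fun α => Odd α ∧
        (α * y % 2 ^ v / 2 ^ t ≤ 2 ∨ 2 ^ u - 2 ≤ α * y % 2 ^ v / 2 ^ t))
      = ((range (2 ^ v)).filter fun α => Q ((α % 2^w) * m % 2^w)) := by
    apply Finset.filter_congr
    intro α _
    have hodd : Odd α ↔ Odd ((α % 2^w) * m % 2^w) := by
      rw [Nat.mod_mul_mod, Nat.odd_iff, Nat.odd_iff]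
      have h1 : α * m % 2 ^ w % 2 = α % 2 := by
        rw [Nat.mod_mod_of_dvd _ h2w, Nat.mul_mod, Nat.odd_iff.mp hmodd, mul_one]
        omega
      omega
    have hcond : (α * y % 2 ^ v / 2 ^ t ≤ 2 ∨ 2 ^ u - 2 ≤ α * y % 2 ^ v / 2 ^ t)
        ↔ (2^s * ((α % 2^w) * m % 2^w) < 3 * 2^t ∨ 2^v - 2^(t+1) ≤ 2^s * ((α % 2^w) * m % 2^w)) := by
      rw [Nat.mod_mul_mod, hrem α]
      constructor
      · rintro (h | h)
        · left
          have := (Nat.div_lt_iff_lt_mul ht0).mp (by omega : 2^s * (α * m % 2^w) / 2^t < 3)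
          omega
        · right
          have := (Nat.le_div_iff_mul_le ht0).mp h
          have heq : (2^u - 2) * 2^t = 2^v - 2^(t+1) := by
            have e1 : (2:ℕ)^u * 2^t = 2^v := by rw [← pow_add]; congr 1; omega
            have e2 : (2:ℕ)^(t+1) = 2 * 2^t := by rw [pow_succ]; ring
            rw [Nat.sub_mul]
            omega
          omega
      · rintro (h | h)
        · left
          have := (Nat.div_lt_iff_lt_mul ht0).mpr h
          omega
        · right
          rw [Nat.le_div_iff_mul_le ht0]
          have heq : (2^u - 2) * 2^t = 2^v - 2^(t+1) := by
            have e1 : (2:ℕ)^u * 2^t = 2^v := by rw [← pow_add]; congr 1; omega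
            have e2 : (2:ℕ)^(t+1) = 2 * 2^t := by rw [pow_succ]; ring
            rw [Nat.sub_mul]
            omega
          omega
    rw [hQ]
    dsimp only
    rw [← hodd, ← hcond]
  rw [hcongr1]
  -- factor through blocks of size 2^w
  have hstep2 : ((range (2 ^ v)).filter fun α => Q ((α % 2^w) * m % 2^w)).card
      = 2^s * ((range (2^w)).filter fun β => Q (β * m % 2^w)).card := by
    have h := card_filter_mod (2^s) (2^w) (Nat.pow_pos (by norm_num))
      (fun β => Q (β * m % 2^w))
    rw [← hvw] at h
    exact h
  rw [hstep2]
  -- bijection by multiplication with m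
  obtain ⟨mi, -, hmi⟩ := Nat.exists_mul_mod_eq_one_of_coprime
    (Nat.Coprime.pow_right w hmodd.coprime_two_right) (Nat.one_lt_two_pow (by omega))
  have hstep3 : ((range (2^w)).filter fun β => Q (β * m % 2^w)).card
      = ((range (2^w)).filter Q).card :=
    card_filter_mul (Nat.pow_pos (by norm_num)) hmi Q
  rw [hstep3]
  -- split the disjunction
  have hsplit : ((range (2^w)).filter Q).card ≤
      ((range (2^w)).filter (fun γ => Odd γ ∧ 2^s * γ < 3 * 2^t)).card
      + ((range (2^w)).filter (fun γ => Odd γ ∧ 2^v - 2^(t+1) ≤ 2^s * γ)).card := by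
    refine le_trans (Finset.card_le_card ?_) (Finset.card_union_le _ _)
    intro γ hγ
    simp only [mem_filter, mem_union, hQ] at hγ ⊢
    tauto
  have h2s0 : 0 < (2:ℕ)^s := Nat.pow_pos (by norm_num)
  have e4 : (2:ℕ)^(t+2) = 4 * 2^t := by rw [pow_add]; ring
  by_cases hcase1 : s ≤ t
  · -- case s ≤ t
    have hA : ((range (2^w)).filter (fun γ => Odd γ ∧ 2^s * γ < 3 * 2^t)).card
        ≤ 2 * 2^(t-s) := by
      have hsub1 : ((range (2^w)).filter (fun γ => Odd γ ∧ 2^s * γ < 3 * 2^t))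
          ⊆ (range (3 * 2^(t-s))).filter (fun γ => Odd γ) := by
        intro γ hγ
        simp only [mem_filter, mem_range] at hγ ⊢
        refine ⟨?_, hγ.2.1⟩
        have e : 3 * 2^t = 2^s * (3 * 2^(t-s)) := by
          rw [show (2:ℕ)^t = 2^s * 2^(t-s) by rw [← pow_add]; congr 1; omega]
          ring
        have h := hγ.2.2
        rw [e] at h
        exact lt_of_mul_lt_mul_left h (Nat.zero_le _)
      calc ((range (2^w)).filter (fun γ => Odd γ ∧ 2^s * γ < 3 * 2^t)).card
          ≤ ((range (3 * 2^(t-s))).filter (fun γ => Odd γ)).card :=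
            Finset.card_le_card hsub1
        _ = 3 * 2^(t-s) / 2 := odd_card_range _
        _ ≤ 2 * 2^(t-s) := by omega
    have hB : ((range (2^w)).filter (fun γ => Odd γ ∧ 2^v - 2^(t+1) ≤ 2^s * γ)).card
        ≤ 2^(t-s) := by
      have hLw : (2:ℕ)^(t+1-s) ≤ 2^w := Nat.pow_le_pow_right (by norm_num) (by omega)
      have e1 : (2:ℕ)^s * 2^(t+1-s) = 2^(t+1) := by rw [← pow_add]; congr 1; omega
      have e2 : (2:ℕ)^(t+1-s) = 2 * 2^(t-s) := by
        rw [show t+1-s = (t-s)+1 by omega, pow_succ]; ring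
      have hsub2 : ((range (2^w)).filter (fun γ => Odd γ ∧ 2^v - 2^(t+1) ≤ 2^s * γ))
          ⊆ (range (2^w)).filter (fun γ => Odd γ ∧ (2^w - 2^(t+1-s)) ≤ γ) := by
        intro γ hγ
        simp only [mem_filter, mem_range] at hγ ⊢
        refine ⟨hγ.1, hγ.2.1, ?_⟩
        have e : 2^v - 2^(t+1) = 2^s * (2^w - 2^(t+1-s)) := by
          rw [Nat.mul_sub, e1, ← hvw]
        have h := hγ.2.2
        rw [e] at h
        exact Nat.le_of_mul_le_mul_left h h2s0
      calc ((range (2^w)).filter (fun γ => Odd γ ∧ 2^v - 2^(t+1) ≤ 2^s * γ)).card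
          ≤ ((range (2^w)).filter (fun γ => Odd γ ∧ (2^w - 2^(t+1-s)) ≤ γ)).card :=
            Finset.card_le_card hsub2
        _ ≤ (2^w - (2^w - 2^(t+1-s))) / 2 :=
            odd_card_range_ge _ _ (Nat.dvd_sub h2w (dvd_pow_self 2 (by omega)))
        _ ≤ 2^(t-s) := by omega
    have ets : (2:ℕ)^s * 2^(t-s) = 2^t := by rw [← pow_add]; congr 1; omega
    calc 2^s * ((range (2^w)).filter Q).card
        ≤ 2^s * (2 * 2^(t-s) + 2^(t-s)) :=
          Nat.mul_le_mul_left _ (le_trans hsplit (by omega))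
      _ = 3 * (2^s * 2^(t-s)) := by ring
      _ = 3 * 2^t := by rw [ets]
      _ ≤ 2^(t+2) := by omega
  · by_cases hcase2 : s = t + 1
    · -- case s = t+1
      subst hcase2
      have es : (2:ℕ)^(t+1) = 2^t * 2 := pow_succ 2 t
      have hA : ((range (2^w)).filter (fun γ => Odd γ ∧ 2^(t+1) * γ < 3 * 2^t)).card
          ≤ 1 := by
        have hsub1 : ((range (2^w)).filter (fun γ => Odd γ ∧ 2^(t+1) * γ < 3 * 2^t))
            ⊆ {1} := by
          intro γ hγ
          simp only [mem_filter, mem_range, Finset.mem_singleton] at hγ ⊢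
          obtain ⟨hγw, hodd, hlt⟩ := hγ
          have e : 2^(t+1) * γ = 2^t * (2 * γ) := by rw [es]; ring
          rw [e, show 3 * 2^t = 2^t * 3 by ring] at hlt
          have h2γ : 2 * γ < 3 := lt_of_mul_lt_mul_left hlt (Nat.zero_le _)
          have := Nat.odd_iff.mp hodd
          omega
        exact le_trans (Finset.card_le_card hsub1) (by simp)
      have hB : ((range (2^w)).filter (fun γ => Odd γ ∧ 2^v - 2^(t+1) ≤ 2^(t+1) * γ)).card
          ≤ 1 := by
        have hsub2 : ((range (2^w)).filter (fun γ => Odd γ ∧ 2^v - 2^(t+1) ≤ 2^(t+1) * γ))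
            ⊆ {2^w - 1} := by
          intro γ hγ
          simp only [mem_filter, mem_range, Finset.mem_singleton] at hγ ⊢
          obtain ⟨hγw, hodd, hge⟩ := hγ
          have e : 2^v - 2^(t+1) = 2^(t+1) * (2^w - 1) := by
            rw [Nat.mul_sub, mul_one, ← hvw]
          rw [e] at hge
          have := Nat.le_of_mul_le_mul_left hge (Nat.pow_pos (by norm_num) : 0 < 2^(t+1))
          omega
        exact le_trans (Finset.card_le_card hsub2) (by simp)
      calc 2^(t+1) * ((range (2^w)).filter Q).card
          ≤ 2^(t+1) * 2 := Nat.mul_le_mul_left _ (le_trans hsplit (by omega))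
        _ = 2^(t+2) := by rw [pow_succ 2 (t+1)]
    · -- case t + 2 ≤ s
      have hcs : t + 2 ≤ s := by omega
      have h2s : (2:ℕ)^(t+2) ≤ 2^s := Nat.pow_le_pow_right (by norm_num) hcs
      have hA : ((range (2^w)).filter (fun γ => Odd γ ∧ 2^s * γ < 3 * 2^t)).card = 0 := by
        rw [Finset.card_eq_zero, Finset.filter_eq_empty_iff]
        rintro γ hγ ⟨hodd, hlt⟩
        have h1 : 1 ≤ γ := hodd.pos
        have hmul : 2^s * 1 ≤ 2^s * γ := Nat.mul_le_mul_left _ h1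
        rw [mul_one] at hmul
        omega
      have hB : ((range (2^w)).filter (fun γ => Odd γ ∧ 2^v - 2^(t+1) ≤ 2^s * γ)).card
          = 0 := by
        rw [Finset.card_eq_zero, Finset.filter_eq_empty_iff]
        rintro γ hγ ⟨hodd, hge⟩
        rw [mem_range] at hγ
        have hmul : 2^s * (γ+1) ≤ 2^s * 2^w := Nat.mul_le_mul_left _ (by omega)
        have e : 2^s * (γ+1) = 2^s * γ + 2^s := by ring
        have ht1 : (2:ℕ)^(t+1) ≤ 2^v := Nat.pow_le_pow_right (by norm_num) (by omega)
        have e5 : (2:ℕ)^(t+2) = 2 * 2^(t+1) := by rw [pow_succ]; ring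
        have h1t : (1:ℕ) ≤ 2^(t+1) := Nat.one_le_two_pow
        omega
      calc 2^s * ((range (2^w)).filter Q).card
          ≤ 2^s * 0 := Nat.mul_le_mul_left _ (le_trans hsplit (by omega))
        _ ≤ 2^(t+2) := by omega

open scoped Classical in
/-- for `v ≥ u ≥ 3` and an integer `x` not divisible by `2^v`, the number
of odd `α ∈ [0..2^v)` with `h_α(x) ∈ {0, 1, 2, 2^u−2, 2^u−1}` is at most `2^(v−u+2)`
(equivalently, a uniformly random odd `α` lands there with probability at most `8/2^u`). -/
theorem stmt_19 (u v : ℕ) (hu : 3 ≤ u) (huv : u ≤ v)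
    (x : ℤ) (hx : ¬ ((2 : ℤ) ^ v ∣ x)) :
    ((Finset.range (2 ^ v)).filter fun α : ℕ => Odd α ∧
        hfun u v (α : ℤ) x ∈ ({0, 1, 2, 2 ^ u - 2, 2 ^ u - 1} : Set ℤ)).card
      ≤ 2 ^ (v - u + 2) := by
  have h2v : (0:ℤ) < 2^v := by positivity
  set y : ℕ := (x % 2^v).toNat with hy
  have hynn : (0:ℤ) ≤ x % 2^v := Int.emod_nonneg x h2v.ne'
  have hyx : (y:ℤ) = x % 2^v := Int.toNat_of_nonneg hynn
  have hylt : y < 2^v := by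
    have h : (y:ℤ) < ((2^v : ℕ) : ℤ) := by
      rw [hyx]; push_cast; exact Int.emod_lt_of_pos x h2v
    exact_mod_cast h
  have hy0 : 0 < y := by
    rcases Nat.eq_zero_or_pos y with h | h
    · exfalso
      apply hx
      apply Int.dvd_of_emod_eq_zero
      rw [← hyx, h]
      simp
    · exact h
  have hmain : ∀ α : ℕ, hfun u v (α:ℤ) x = ((α * y % 2^v / 2^(v-u) : ℕ) : ℤ) := by
    intro α
    show (α:ℤ) * x % 2^v / 2^(v-u) = _
    have hxy : x % (2:ℤ)^v = ((y:ℕ):ℤ) % 2^v := by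
      rw [hyx, Int.emod_emod_of_dvd _ dvd_rfl]
    rw [Int.mul_emod, hxy, ← Int.mul_emod]
    push_cast
    ring
  have hfilter : (Finset.range (2 ^ v)).filter (fun α : ℕ => Odd α ∧
        hfun u v (α : ℤ) x ∈ ({0, 1, 2, 2 ^ u - 2, 2 ^ u - 1} : Set ℤ))
      = (Finset.range (2 ^ v)).filter (fun α => Odd α ∧
        (α * y % 2 ^ v / 2 ^ (v - u) ≤ 2 ∨ 2 ^ u - 2 ≤ α * y % 2 ^ v / 2 ^ (v - u))) := by
    apply Finset.filter_congr
    intro α _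
    rw [hmain α]
    have hr : α * y % 2^v < 2^v := Nat.mod_lt _ (Nat.pow_pos (by norm_num))
    have hn : α * y % 2^v / 2^(v-u) < 2^u := by
      rw [Nat.div_lt_iff_lt_mul (Nat.pow_pos (by norm_num))]
      calc α * y % 2^v < 2^v := hr
        _ = 2^u * 2^(v-u) := by rw [← pow_add]; congr 1; omega
    have h8 : 8 ≤ 2^u := by
      calc (8:ℕ) = 2^3 := by norm_num
        _ ≤ 2^u := Nat.pow_le_pow_right (by norm_num) hu
    have hc : ((2^u : ℕ) : ℤ) = (2:ℤ)^u := by push_cast; ring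
    simp only [Set.mem_insert_iff, Set.mem_singleton_iff]
    generalize hgen : α * y % 2 ^ v / 2 ^ (v - u) = n at hn ⊢
    constructor
    · rintro ⟨ho, h⟩
      exact ⟨ho, by omega⟩
    · rintro ⟨ho, h⟩
      exact ⟨ho, by omega⟩
  rw [hfilter]
  exact key_nat u v hu huv y hy0 hylt
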